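/- Let R be a commutative ring and let a, b : ℤ → R satisfy a(n) = b(n) = 0 for all n < 0, and suppose that Σ_{i+j=n, i,j ≥ 0} a(i)·b(j) equals 1 if n = 0 and equals 0 for every n ≥ 1 (i.e. the power series Σ a(n)t^n and Σ b(n)t^n are mutually inverse). Then for every natural number d and all weakly decreasing sequences λ, μ : {1,…,d} → ℤ, one has Σ_ν Δ_{λ/ν}(a)·Δ_{ν/μ}(b) = 1 if λ = μ and = 0 otherwise, where the sum runs over all weakly decreasing sequences ν : {1,…,d} → ℤ with μ_j ≤ ν_j ≤ λ_j for all j. -/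

import Mathlib

/-- The skew Schur determinant `Δ_{λ/μ}(c) = det(c (λ_i - μ_j + j - i))`. -/
def skewSchur {R : Type*} [CommRing R] (c : ℤ → R) (d : ℕ) (lam mu : Fin d → ℤ) : R :=
  (Matrix.of fun i j : Fin d => c (lam i - mu j + ((j : ℕ) : ℤ) - ((i : ℕ) : ℤ))).det


open Finset Equiv Equiv.Perm Matrix in
private theorem cb_aux' {R : Type*} [CommRing R] {d : ℕ} {n : Type*} [Fintype n] [DecidableEq n]
    {M : Matrix (Fin d) n R} {N : Matrix n (Fin d) R} {p : Fin d → n}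
    (H : ¬Function.Injective p) :
    (∑ σ : Perm (Fin d), ((Perm.sign σ : ℤ) : R) * ∏ x, M (σ x) (p x) * N (p x) x) = 0 := by
  obtain ⟨i, j, hpij, hij⟩ : ∃ i j, p i = p j ∧ i ≠ j := Function.not_injective_iff.mp H
  exact
    sum_involution (fun σ _ => σ * Equiv.swap i j)
      (fun σ _ => by
        have : (∏ x, M (σ x) (p x)) = ∏ x, M ((σ * Equiv.swap i j) x) (p x) :=
          Fintype.prod_equiv (Equiv.swap i j) _ _ (by simp [apply_swap_eq_self hpij])
        simp [this, sign_swap hij, -sign_swap', prod_mul_distrib])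
      (fun σ _ _ => (not_congr mul_swap_eq_iff).mpr hij) (fun _ _ => mem_univ _) fun σ _ =>
      mul_swap_involutive i j σ

open Finset Equiv Equiv.Perm Matrix in
private theorem perm_sum_eq_det_mul {R : Type*} [CommRing R] {d : ℕ}
    (M N : Matrix (Fin d) (Fin d) R) :
    (∑ τ : Perm (Fin d), ∑ σ : Perm (Fin d),
        ((Perm.sign σ : ℤ) : R) * ∏ i, M (σ i) (τ i) * N (τ i) i) = det M * det N := by
  classical
  have : det (M * N) = ∑ τ : Perm (Fin d), ∑ σ : Perm (Fin d),
      ((Perm.sign σ : ℤ) : R) * ∏ i, M (σ i) (τ i) * N (τ i) i :=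
    calc
      det (M * N) = ∑ p : Fin d → Fin d, ∑ σ : Perm (Fin d),
          ((Perm.sign σ : ℤ) : R) * ∏ i, M (σ i) (p i) * N (p i) i := by
        simp only [det_apply', Matrix.mul_apply, prod_univ_sum, mul_sum, Fintype.piFinset_univ]
        rw [Finset.sum_comm]
      _ = ∑ p ∈ Finset.univ.filter (fun p : Fin d → Fin d => Function.Injective p),
          ∑ σ : Perm (Fin d), ((Perm.sign σ : ℤ) : R) * ∏ i, M (σ i) (p i) * N (p i) i := by
        refine (sum_subset (filter_subset _ _) fun f _ hinj => cb_aux' ?_).symm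
        simpa only [true_and, mem_filter, mem_univ] using hinj
      _ = ∑ τ : Perm (Fin d), ∑ σ : Perm (Fin d),
          ((Perm.sign σ : ℤ) : R) * ∏ i, M (σ i) (τ i) * N (τ i) i :=
        sum_bij (fun p h => Equiv.ofBijective p
            (Finite.injective_iff_bijective.mp (mem_filter.1 h).2))
          (fun _ _ => mem_univ _)
          (fun _ _ _ _ h => by injection h)
          (fun b _ => ⟨b, mem_filter.2 ⟨mem_univ _, b.injective⟩, coe_fn_injective rfl⟩)
          fun _ _ => rfl
  rw [← this, det_mul]

private theorem exists_perm_comp {n : Type*} [DecidableEq n] {d : ℕ} {p q : Fin d → n}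
    (hp : Function.Injective p) (hq : Function.Injective q)
    (h : Finset.image p Finset.univ = Finset.image q Finset.univ) :
    ∃ τ : Equiv.Perm (Fin d), p ∘ τ = q := by
  have hbij : ∀ (r : Fin d → n), Function.Injective r →
      Function.Bijective (fun i : Fin d => (⟨r i, Finset.mem_image_of_mem _ (Finset.mem_univ i)⟩ :
        {z // z ∈ Finset.image r Finset.univ})) := by
    intro r hr
    rw [Fintype.bijective_iff_injective_and_card]
    constructor
    · intro i j hij
      exact hr (congrArg Subtype.val hij)
    · rw [Fintype.card_coe, Finset.card_image_of_injective _ hr, Finset.card_univ,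
        Fintype.card_fin]
  let ep : Fin d ≃ {z // z ∈ Finset.image p Finset.univ} := Equiv.ofBijective _ (hbij p hp)
  let eq' : Fin d ≃ {z // z ∈ Finset.image q Finset.univ} := Equiv.ofBijective _ (hbij q hq)
  let e2 : Fin d ≃ {z // z ∈ Finset.image p Finset.univ} :=
    eq'.trans (Equiv.subtypeEquivProp (by rw [h]))
  refine ⟨e2.trans ep.symm, funext fun i => ?_⟩
  calc p ((e2.trans ep.symm) i) = ↑(ep (ep.symm (e2 i))) := rfl
    _ = ↑(e2 i) := by rw [Equiv.apply_symm_apply]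
    _ = q i := rfl


private theorem strictAnti_eq_of_image_eq {n : Type*} [LinearOrder n] {d : ℕ}
    {x y : Fin d → n} (hx : StrictAnti x) (hy : StrictAnti y)
    (h : Finset.image x Finset.univ = Finset.image y Finset.univ) : x = y := by
  classical
  have hcard : (Finset.image x Finset.univ).card = d := by
    rw [Finset.card_image_of_injective _ hx.injective, Finset.card_univ, Fintype.card_fin]
  have hx' : (fun i : Fin d => x i.rev) = (Finset.image x Finset.univ).orderEmbOfFin hcard :=
    Finset.orderEmbOfFin_unique hcard (fun i => Finset.mem_image_of_mem _ (Finset.mem_univ _))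
      (fun i j hij => hx (by simpa using Fin.rev_lt_rev.mpr hij))
  have hy' : (fun i : Fin d => y i.rev) = (Finset.image x Finset.univ).orderEmbOfFin hcard :=
    Finset.orderEmbOfFin_unique hcard
      (fun i => h ▸ Finset.mem_image_of_mem _ (Finset.mem_univ _))
      (fun i j hij => hy (by simpa using Fin.rev_lt_rev.mpr hij))
  funext i
  have := congrFun (hx'.trans hy'.symm) i.rev
  simpa using this

private noncomputable def zOf {n : Type*} [LinearOrder n] {d : ℕ} (p : Fin d → n)
    (hp : Function.Injective p) : Fin d → n := fun k =>
  (Finset.image p Finset.univ).orderEmbOfFin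
    (by classical rw [Finset.card_image_of_injective _ hp, Finset.card_univ, Fintype.card_fin])
    k.rev

private theorem zOf_strictAnti {n : Type*} [LinearOrder n] {d : ℕ} (p : Fin d → n)
    (hp : Function.Injective p) : StrictAnti (zOf p hp) := fun i j hij =>
  (Finset.orderEmbOfFin _ _).strictMono (Fin.rev_lt_rev.mpr hij)

private theorem zOf_image {n : Type*} [LinearOrder n] {d : ℕ} (p : Fin d → n)
    (hp : Function.Injective p) :
    Finset.image (zOf p hp) Finset.univ = Finset.image p Finset.univ := by
  classical
  have hcard : (Finset.image p Finset.univ).card = d := by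
    rw [Finset.card_image_of_injective _ hp, Finset.card_univ, Fintype.card_fin]
  ext t
  simp only [Finset.mem_image, Finset.mem_univ, true_and]
  constructor
  · rintro ⟨k, rfl⟩
    obtain ⟨aa, -, haa⟩ := Finset.mem_image.mp
      (Finset.orderEmbOfFin_mem (Finset.image p Finset.univ) hcard k.rev)
    exact ⟨aa, haa⟩
  · intro ht
    have hmem : t ∈ (↑(Finset.image p Finset.univ) : Set n) :=
      Finset.mem_coe.mpr (Finset.mem_image.mpr (by simpa using ht))
    rw [← Finset.range_orderEmbOfFin _ hcard] at hmem
    obtain ⟨k, hk⟩ := hmem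
    exact ⟨k.rev, by simpa [zOf, Fin.rev_rev] using hk⟩


open Finset Equiv Equiv.Perm Matrix in
private theorem cauchyBinet {R : Type*} [CommRing R] {d : ℕ} {n : Type*} [Fintype n]
    [LinearOrder n] (A : Matrix (Fin d) n R) (B : Matrix n (Fin d) R) :
    det (A * B) = ∑ z ∈ Finset.univ.filter (fun z : Fin d → n => StrictAnti z),
      det (A.submatrix id z) * det (B.submatrix z id) := by
  classical
  have step1 : det (A * B) = ∑ p : Fin d → n, ∑ σ : Perm (Fin d),
      ((Perm.sign σ : ℤ) : R) * ∏ i, A (σ i) (p i) * B (p i) i := by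
    simp only [det_apply', Matrix.mul_apply, prod_univ_sum, mul_sum, Fintype.piFinset_univ]
    rw [Finset.sum_comm]
  have step2 : (∑ p : Fin d → n, ∑ σ : Perm (Fin d),
        ((Perm.sign σ : ℤ) : R) * ∏ i, A (σ i) (p i) * B (p i) i)
      = ∑ p ∈ Finset.univ.filter (fun p : Fin d → n => Function.Injective p),
        ∑ σ : Perm (Fin d), ((Perm.sign σ : ℤ) : R) * ∏ i, A (σ i) (p i) * B (p i) i := by
    refine (sum_subset (filter_subset _ _) fun f _ hinj => cb_aux' ?_).symm
    simpa only [true_and, mem_filter, mem_univ] using hinj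
  set φ : (Fin d → n) → (Fin d → n) :=
    fun p => if h : Function.Injective p then zOf p h else p with hφ
  have hmaps : ∀ p ∈ Finset.univ.filter (fun p : Fin d → n => Function.Injective p),
      φ p ∈ Finset.univ.filter (fun z : Fin d → n => StrictAnti z) := by
    intro p hp
    have hinj := (mem_filter.mp hp).2
    simp only [hφ, dif_pos hinj, mem_filter, mem_univ, true_and]
    exact zOf_strictAnti p hinj
  have step3 := Finset.sum_fiberwise_of_maps_to hmaps
    (fun p => ∑ σ : Perm (Fin d), ((Perm.sign σ : ℤ) : R) * ∏ i, A (σ i) (p i) * B (p i) i)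
  rw [step1, step2, ← step3]
  refine Finset.sum_congr rfl fun z hz => ?_
  have hzA : StrictAnti z := (mem_filter.mp hz).2
  have fib : (∑ p ∈ (Finset.univ.filter (fun p : Fin d → n => Function.Injective p)).filter
        (fun p => φ p = z),
      ∑ σ : Perm (Fin d), ((Perm.sign σ : ℤ) : R) * ∏ i, A (σ i) (p i) * B (p i) i)
      = ∑ τ : Perm (Fin d), ∑ σ : Perm (Fin d),
        ((Perm.sign σ : ℤ) : R) * ∏ i, A (σ i) (z (τ i)) * B (z (τ i)) i := by
    refine (Finset.sum_bij (fun (τ : Perm (Fin d)) _ => z ∘ τ) ?_ ?_ ?_ ?_).symm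
    · intro τ _
      have hinj : Function.Injective (z ∘ τ) := hzA.injective.comp τ.injective
      refine mem_filter.mpr ⟨mem_filter.mpr ⟨mem_univ _, hinj⟩, ?_⟩
      simp only [hφ, dif_pos hinj]
      refine strictAnti_eq_of_image_eq (zOf_strictAnti _ _) hzA ?_
      rw [zOf_image]
      ext t
      simp only [Finset.mem_image, Finset.mem_univ, true_and, Function.comp_apply]
      constructor
      · rintro ⟨k, rfl⟩; exact ⟨τ k, rfl⟩
      · rintro ⟨k, rfl⟩; exact ⟨τ.symm k, by simp⟩
    · intro τ1 _ τ2 _ h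
      exact Equiv.ext fun i => hzA.injective (congrFun h i)
    · intro p hp
      have hinj : Function.Injective p := (mem_filter.mp (mem_filter.mp hp).1).2
      have hφp : φ p = z := (mem_filter.mp hp).2
      have hz' : zOf p hinj = z := by
        simpa only [hφ, dif_pos hinj] using hφp
      obtain ⟨τ, hτ⟩ := exists_perm_comp hzA.injective hinj (by rw [← hz', zOf_image])
      exact ⟨τ, mem_univ _, hτ⟩
    · intro τ _
      rfl
  rw [fib, ← perm_sum_eq_det_mul (A.submatrix id z) (B.submatrix z id)]
  rfl


private theorem det_one_submatrix' {R : Type*} [CommRing R] {n : Type*} [Fintype n]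
    [LinearOrder n] {d : ℕ} {x y : Fin d → n} (hx : StrictAnti x) (hy : StrictAnti y) :
    Matrix.det ((1 : Matrix n n R).submatrix x y) = if x = y then 1 else 0 := by
  classical
  split_ifs with h
  · subst h
    have : (1 : Matrix n n R).submatrix x x = (1 : Matrix (Fin d) (Fin d) R) := by
      ext i j
      simp [Matrix.one_apply, hx.injective.eq_iff]
    rw [this, Matrix.det_one]
  · have hcards : (Finset.image y Finset.univ).card = (Finset.image x Finset.univ).card := by
      rw [Finset.card_image_of_injective _ hx.injective,
        Finset.card_image_of_injective _ hy.injective]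
    have hsub : ¬ Finset.image x Finset.univ ⊆ Finset.image y Finset.univ := by
      intro hs
      exact h (strictAnti_eq_of_image_eq hx hy
        (Finset.eq_of_subset_of_card_le hs hcards.le))
    obtain ⟨t, htx, hty⟩ := Finset.not_subset.mp hsub
    obtain ⟨i, -, rfl⟩ := Finset.mem_image.mp htx
    apply Matrix.det_eq_zero_of_row_eq_zero i
    intro j
    have : x i ≠ y j := fun hxy => hty (hxy ▸ Finset.mem_image_of_mem _ (Finset.mem_univ j))
    simp [Matrix.one_apply, this]

private theorem det_eq_zero_of_zero_block {R : Type*} [CommRing R] {d : ℕ}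
    (M : Matrix (Fin d) (Fin d) R) (j : Fin d)
    (h : ∀ r c : Fin d, j ≤ r → c ≤ j → M r c = 0) : M.det = 0 := by
  rw [Matrix.det_apply']
  refine Finset.sum_eq_zero fun σ _ => ?_
  obtain ⟨c, hc, hσc⟩ : ∃ c : Fin d, c ≤ j ∧ j ≤ σ c := by
    by_contra hcon
    push_neg at hcon
    have hmap : ∀ c ∈ Finset.Iic j, σ c ∈ Finset.Iio j := fun c hc =>
      Finset.mem_Iio.mpr (hcon c (Finset.mem_Iic.mp hc))
    have hcard := Finset.card_le_card_of_injOn σ hmap (σ.injective.injOn)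
    rw [Fin.card_Iic, Fin.card_Iio] at hcard
    omega
  have hz : (∏ i, M (σ i) i) = 0 :=
    Finset.prod_eq_zero (Finset.mem_univ c) (h (σ c) c hσc hc)
  rw [hz, mul_zero]

private theorem strictAnti_coe_antitone_add {d : ℕ} {w : Fin d → ℤ} (hw : StrictAnti w) :
    Antitone (fun i : Fin d => w i + ((i : ℕ) : ℤ)) := by
  have key : ∀ k : ℕ, ∀ i j : Fin d, (j : ℕ) = (i : ℕ) + k →
      w j + ((j : ℕ) : ℤ) ≤ w i + ((i : ℕ) : ℤ) := by
    intro k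
    induction k with
    | zero =>
      intro i j hij
      have : i = j := Fin.ext (by omega)
      subst this
      exact le_rfl
    | succ k ih =>
      intro i j hij
      have hj' : (i : ℕ) + k < d := by have := j.isLt; omega
      have hval : ((⟨(i : ℕ) + k, hj'⟩ : Fin d) : ℕ) = (i : ℕ) + k := rfl
      have hlt : (⟨(i : ℕ) + k, hj'⟩ : Fin d) < j := by rw [Fin.lt_def]; omega
      have h1 : w j < w ⟨(i : ℕ) + k, hj'⟩ := hw hlt
      have h2 := ih i ⟨(i : ℕ) + k, hj'⟩ hval.symm
      omega
  intro i j hij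
  exact key ((j : ℕ) - (i : ℕ)) i j (by have := Fin.le_def.mp hij; omega)

private theorem antitone_sub_strictAnti {d : ℕ} {nu : Fin d → ℤ} (hnu : Antitone nu) :
    StrictAnti (fun i : Fin d => nu i - ((i : ℕ) : ℤ)) := by
  intro i j hij
  have h1 : nu j ≤ nu i := hnu hij.le
  have h2 : (i : ℕ) < (j : ℕ) := hij
  simp only []
  omega


private theorem toeplitz_conv {R : Type*} [CommRing R] (a b : ℤ → R)
    (ha : ∀ n : ℤ, n < 0 → a n = 0) (hb : ∀ n : ℤ, n < 0 → b n = 0)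
    (hab : ∀ n : ℕ, (∑ p ∈ Finset.HasAntidiagonal.antidiagonal n, a (p.1 : ℤ) * b (p.2 : ℤ)) =
      if n = 0 then 1 else 0)
    {m M u w : ℤ} (hu : u ∈ Finset.Icc m M) (hw : w ∈ Finset.Icc m M) :
    (∑ v ∈ Finset.Icc m M, a (u - v) * b (v - w)) = if u = w then 1 else 0 := by
  rw [Finset.mem_Icc] at hu hw
  by_cases hle : w ≤ u
  · have hsub : Finset.Icc w u ⊆ Finset.Icc m M := by
      intro v hv
      rw [Finset.mem_Icc] at hv ⊢
      omega
    rw [← Finset.sum_subset hsub (fun v hv hvn => ?van)]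
    case van =>
      rw [Finset.mem_Icc] at hv hvn
      rcases (by omega : v < w ∨ u < v) with h | h
      · rw [hb _ (by omega), mul_zero]
      · rw [ha _ (by omega), zero_mul]
    have hmain : (∑ v ∈ Finset.Icc w u, a (u - v) * b (v - w))
        = ∑ p ∈ Finset.HasAntidiagonal.antidiagonal (u - w).toNat, a (p.1 : ℤ) * b (p.2 : ℤ) := by
      refine Finset.sum_nbij' (fun v => ((u - v).toNat, (v - w).toNat))
        (fun p => w + (p.2 : ℤ)) ?_ ?_ ?_ ?_ ?_
      · intro v hv
        rw [Finset.mem_Icc] at hv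
        rw [Finset.HasAntidiagonal.mem_antidiagonal]
        dsimp only
        omega
      · intro p hp
        rw [Finset.HasAntidiagonal.mem_antidiagonal] at hp
        rw [Finset.mem_Icc]
        omega
      · intro v hv
        rw [Finset.mem_Icc] at hv
        dsimp only
        omega
      · intro p hp
        rw [Finset.HasAntidiagonal.mem_antidiagonal] at hp
        ext <;> simp <;> omega
      · intro v hv
        rw [Finset.mem_Icc] at hv
        dsimp only
        have h1 : ((u - v).toNat : ℤ) = u - v := by omega
        have h2 : ((v - w).toNat : ℤ) = v - w := by omega
        rw [h1, h2]
    rw [hmain, hab]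
    by_cases huw : u = w
    · simp [huw]
    · have : (u - w).toNat ≠ 0 := by omega
      simp [this, huw]
  · have hz : ∀ v ∈ Finset.Icc m M, a (u - v) * b (v - w) = 0 := by
      intro v hv
      rw [Finset.mem_Icc] at hv
      rcases (by omega : v < w ∨ u < v) with h | h
      · rw [hb _ (by omega), mul_zero]
      · rw [ha _ (by omega), zero_mul]
    rw [Finset.sum_eq_zero hz, if_neg (by omega)]


open Classical in
/-- If the power series with coefficients `a` and `b` are mutually inverse, then
`Σ_{μ ⊆ ν ⊆ λ} Δ_{λ/ν}(a) · Δ_{ν/μ}(b) = δ_{λ,μ}`, the sum running over weakly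
decreasing `ν` with `μ_j ≤ ν_j ≤ λ_j` for all `j`. -/
theorem stmt_8 {R : Type*} [CommRing R] (a b : ℤ → R)
    (ha : ∀ n : ℤ, n < 0 → a n = 0) (hb : ∀ n : ℤ, n < 0 → b n = 0)
    (hab : ∀ n : ℕ, (∑ p ∈ Finset.HasAntidiagonal.antidiagonal n, a (p.1 : ℤ) * b (p.2 : ℤ)) =
      if n = 0 then 1 else 0)
    (d : ℕ) (lam mu : Fin d → ℤ) (hlam : Antitone lam) (hmu : Antitone mu) :
    (∑ nu ∈ (Finset.Icc mu lam).filter (fun nu => Antitone nu),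
        skewSchur a d lam nu * skewSchur b d nu mu) =
      if lam = mu then 1 else 0 := by
  classical
  rcases eq_or_ne d 0 with rfl | hd0
  · have hlm : lam = mu := funext fun i => i.elim0
    subst hlm
    rw [if_pos rfl, Finset.Icc_self]
    rw [Finset.filter_singleton, if_pos hlam, Finset.sum_singleton]
    simp [skewSchur, Matrix.det_fin_zero]
  by_cases hml : mu ≤ lam
  swap
  · rw [Finset.Icc_eq_empty hml, Finset.filter_empty, Finset.sum_empty, if_neg]
    intro h
    exact hml (le_of_eq h.symm)
  haveI : Nonempty (Fin d) := ⟨⟨0, Nat.pos_of_ne_zero hd0⟩⟩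
  set m : ℤ := Finset.univ.inf' Finset.univ_nonempty
    (fun j : Fin d => mu j - ((j : ℕ) : ℤ)) with hm
  set Mx : ℤ := Finset.univ.sup' Finset.univ_nonempty
    (fun i : Fin d => lam i - ((i : ℕ) : ℤ)) with hMx
  have hmle : ∀ j : Fin d, m ≤ mu j - ((j : ℕ) : ℤ) := by
    intro j
    rw [hm]
    exact Finset.inf'_le (fun j : Fin d => mu j - ((j : ℕ) : ℤ)) (Finset.mem_univ j)
  have hMge : ∀ i : Fin d, lam i - ((i : ℕ) : ℤ) ≤ Mx := by
    intro i
    rw [hMx]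
    exact Finset.le_sup' (fun i : Fin d => lam i - ((i : ℕ) : ℤ)) (Finset.mem_univ i)
  set S : Finset ℤ := Finset.Icc m Mx with hS
  set Ta : Matrix S S R := Matrix.of (fun u v : S => a ((u : ℤ) - (v : ℤ))) with hTa
  set Tb : Matrix S S R := Matrix.of (fun u v : S => b ((u : ℤ) - (v : ℤ))) with hTb
  have hmul : Ta * Tb = 1 := by
    ext u v
    rw [Matrix.mul_apply]
    have hsum : (∑ k : S, Ta u k * Tb k v)
        = ∑ k ∈ S, a ((u : ℤ) - k) * b (k - (v : ℤ)) :=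
      Finset.sum_coe_sort S (fun k : ℤ => a ((u : ℤ) - k) * b (k - (v : ℤ)))
    rw [hsum, toeplitz_conv a b ha hb hab u.2 v.2]
    by_cases h : u = v
    · simp [h, Matrix.one_apply]
    · rw [if_neg (fun hc => h (Subtype.ext hc)), Matrix.one_apply_ne h]
  have hxmem : ∀ i : Fin d, lam i - ((i : ℕ) : ℤ) ∈ S := fun i =>
    Finset.mem_Icc.mpr ⟨le_trans (hmle i) (by have h' : mu i ≤ lam i := hml i; omega), hMge i⟩
  have hymem : ∀ j : Fin d, mu j - ((j : ℕ) : ℤ) ∈ S := fun j =>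
    Finset.mem_Icc.mpr ⟨hmle j, le_trans (by have h' : mu j ≤ lam j := hml j; omega) (hMge j)⟩
  set x : Fin d → S := fun i => ⟨lam i - ((i : ℕ) : ℤ), hxmem i⟩ with hx
  set y : Fin d → S := fun j => ⟨mu j - ((j : ℕ) : ℤ), hymem j⟩ with hy
  have hxA : StrictAnti x := fun i j hij =>
    Subtype.mk_lt_mk.mpr (antitone_sub_strictAnti hlam hij)
  have hyA : StrictAnti y := fun i j hij =>
    Subtype.mk_lt_mk.mpr (antitone_sub_strictAnti hmu hij)
  have key := cauchyBinet (Ta.submatrix x id) (Tb.submatrix id y)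
  have hAB : (Ta.submatrix x id) * (Tb.submatrix id y) = (1 : Matrix S S R).submatrix x y := by
    rw [← hmul]
    ext i j
    simp [Matrix.mul_apply, Matrix.submatrix_apply]
  rw [hAB] at key
  have hdet1 : Matrix.det ((1 : Matrix S S R).submatrix x y) = if lam = mu then 1 else 0 := by
    rw [show Matrix.det ((1 : Matrix S S R).submatrix x y) = if x = y then 1 else 0 from by
      convert det_one_submatrix' (R := R) hxA hyA]
    congr 1
    apply propext
    constructor
    · intro h
      funext i
      have := congrArg (fun f => ((f i : S) : ℤ)) h
      simp only [hx, hy] at this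
      omega
    · intro h
      funext i
      apply Subtype.ext
      simp only [hx, hy, h]
  rw [hdet1] at key
  simp only [Matrix.submatrix_submatrix, Function.comp_id, Function.id_comp] at key
  rw [key]
  -- now goal : ∑ nu ∈ target, skew * skew = ∑ z ∈ filter StrictAnti, det * det
  have hsub : Finset.univ.filter
        (fun z : Fin d → S => StrictAnti z ∧ ∀ i, y i ≤ z i ∧ z i ≤ x i)
      ⊆ Finset.univ.filter (fun z : Fin d → S => StrictAnti z) := fun z hz =>
    Finset.mem_filter.mpr ⟨Finset.mem_univ _, (Finset.mem_filter.mp hz).2.1⟩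
  have hvan : ∀ z ∈ Finset.univ.filter (fun z : Fin d → S => StrictAnti z),
      z ∉ Finset.univ.filter
        (fun z : Fin d → S => StrictAnti z ∧ ∀ i, y i ≤ z i ∧ z i ≤ x i) →
      Matrix.det (Ta.submatrix x z) * Matrix.det (Tb.submatrix z y) = 0 := by
    intro z hz hzn
    have hzA : StrictAnti z := (Finset.mem_filter.mp hz).2
    have : ∃ j, ¬(y j ≤ z j ∧ z j ≤ x j) := by
      by_contra hcon
      push_neg at hcon
      exact hzn (Finset.mem_filter.mpr ⟨Finset.mem_univ _, hzA, hcon⟩)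
    obtain ⟨j, hj⟩ := this
    rcases not_and_or.mp hj with hj | hj
    · -- z j < y j : second det is zero
      have hlt : (z j : ℤ) < (y j : ℤ) := not_le.mp fun hc => hj (Subtype.coe_le_coe.mp hc)
      have : Matrix.det (Tb.submatrix z y) = 0 := by
        apply det_eq_zero_of_zero_block _ j
        intro r c hr hc
        have h1 : (z r : ℤ) ≤ (z j : ℤ) := Subtype.coe_le_coe.mpr (hzA.antitone hr)
        have h2 : (y j : ℤ) ≤ (y c : ℤ) := Subtype.coe_le_coe.mpr (hyA.antitone hc)
        show b ((z r : ℤ) - (y c : ℤ)) = 0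
        exact hb _ (by omega)
      rw [this, mul_zero]
    · -- x j < z j : first det is zero
      have hlt : (x j : ℤ) < (z j : ℤ) := not_le.mp fun hc => hj (Subtype.coe_le_coe.mp hc)
      have : Matrix.det (Ta.submatrix x z) = 0 := by
        apply det_eq_zero_of_zero_block _ j
        intro r c hr hc
        have h1 : (x r : ℤ) ≤ (x j : ℤ) := Subtype.coe_le_coe.mpr (hxA.antitone hr)
        have h2 : (z j : ℤ) ≤ (z c : ℤ) := Subtype.coe_le_coe.mpr (hzA.antitone hc)
        show a ((x r : ℤ) - (z c : ℤ)) = 0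
        exact ha _ (by omega)
      rw [this, zero_mul]
  rw [← Finset.sum_subset hsub hvan]
  -- final bijection
  refine Finset.sum_bij'
    (i := fun nu hnu => fun k : Fin d =>
      (⟨nu k - ((k : ℕ) : ℤ), by
        have h1 := Finset.mem_Icc.mp (Finset.mem_filter.mp hnu).1
        have h2 : mu k ≤ nu k := h1.1 k
        have h3 : nu k ≤ lam k := h1.2 k
        have := hmle k
        have := hMge k
        exact Finset.mem_Icc.mpr ⟨by omega, by omega⟩⟩ : S))
    (j := fun z hz => fun k : Fin d => (z k : ℤ) + ((k : ℕ) : ℤ)) ?_ ?_ ?_ ?_ ?_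
  · -- hi : image lands in the filter
    intro nu hnu
    obtain ⟨hmem, hanti⟩ := Finset.mem_filter.mp hnu
    obtain ⟨h1, h2⟩ := Finset.mem_Icc.mp hmem
    refine Finset.mem_filter.mpr ⟨Finset.mem_univ _, ?_, ?_⟩
    · intro p q hpq
      exact Subtype.mk_lt_mk.mpr (antitone_sub_strictAnti hanti hpq)
    · intro k
      constructor
      · exact Subtype.mk_le_mk.mpr (by have h' : mu k ≤ nu k := h1 k; omega)
      · exact Subtype.mk_le_mk.mpr (by have h' : nu k ≤ lam k := h2 k; omega)
  · -- hj
    intro z hz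
    obtain ⟨-, hzA, hbd⟩ := Finset.mem_filter.mp hz
    refine Finset.mem_filter.mpr ⟨Finset.mem_Icc.mpr ⟨?_, ?_⟩, ?_⟩
    · intro k
      have := (hbd k).1
      have := Subtype.coe_le_coe.mpr (hbd k).1
      show mu k ≤ (z k : ℤ) + ((k : ℕ) : ℤ)
      simp only [hy] at this
      omega
    · intro k
      have := Subtype.coe_le_coe.mpr (hbd k).2
      show (z k : ℤ) + ((k : ℕ) : ℤ) ≤ lam k
      simp only [hx] at this
      omega
    · have hw : StrictAnti (fun k : Fin d => (z k : ℤ)) := fun p q hpq =>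
        Subtype.coe_lt_coe.mpr (hzA hpq)
      exact strictAnti_coe_antitone_add hw
  · -- left_inv
    intro nu hnu
    funext k
    simp only []
    omega
  · -- right_inv
    intro z hz
    funext k
    apply Subtype.ext
    simp only []
    omega
  · -- values agree
    intro nu hnu
    congr 1
    · show skewSchur a d lam nu = Matrix.det (Ta.submatrix x _)
      unfold skewSchur
      congr 1
      ext r c
      show a (lam r - nu c + ((c : ℕ) : ℤ) - ((r : ℕ) : ℤ))
        = a ((lam r - ((r : ℕ) : ℤ)) - (nu c - ((c : ℕ) : ℤ)))
      congr 1
      ring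
    · show skewSchur b d nu mu = Matrix.det (Tb.submatrix _ y)
      unfold skewSchur
      congr 1
      ext r c
      show b (nu r - mu c + ((c : ℕ) : ℤ) - ((r : ℕ) : ℤ))
        = b ((nu r - ((r : ℕ) : ℤ)) - (mu c - ((c : ℕ) : ℤ)))
      congr 1
      ring
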